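/- The map 𝓜 is diagonalizable, and its eigenvalues are precisely q^d, q^{d−2}, q^{d−4}, …, q^{−d}; that is, V is the direct sum of the eigenspaces W_i := {v ∈ V : 𝓜v = q^{d−2i}v} for 0 ≤ i ≤ d, and each W_i is nonzero. -/

import Mathlib

/-- Coefficients of the conjugating operator `S = ∑ c k • ψ^k`. -/
noncomputable def stmt9c {𝕂 : Type*} [Field 𝕂] (a q : 𝕂) : ℕ → 𝕂
  | 0 => 1
  | k + 1 => a⁻¹ * q * stmt9c a q k / (1 - q ^ (2 * (k + 1)))

theorem stmt_9
    {𝕂 : Type*} [Field 𝕂] {V : Type*} [AddCommGroup V] [Module 𝕂 V]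
    [FiniteDimensional 𝕂 V]
    (d : ℕ) (hd : 1 ≤ d) (q a : 𝕂) (hq : q ≠ 0) (ha : a ≠ 0)
    (hq2 : ∀ i : ℕ, 1 ≤ i → i ≤ d → q ^ (2 * i) ≠ 1)
    (ha2 : ∀ i : ℤ, 1 - (d : ℤ) ≤ i → i ≤ (d : ℤ) - 1 → a ^ 2 ≠ q ^ (2 * i))
    (K : Module.End 𝕂 V) (hK : IsUnit K)
    (U : ℕ → Submodule 𝕂 V)
    (hUne : ∀ i, i ≤ d → U i ≠ ⊥)
    (hUint : DirectSum.IsInternal (fun i : Fin (d + 1) => U i.1))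
    (hKU : ∀ i, i ≤ d → ∀ v ∈ U i, K v = (q ^ ((d : ℤ) - 2 * (i : ℤ))) • v)
    (ψ : Module.End 𝕂 V)
    (hψ0 : ∀ v ∈ U 0, ψ v = 0)
    (hψU : ∀ i, 1 ≤ i → i ≤ d → ∀ v ∈ U i, ψ v ∈ U (i - 1))
    (hψnil : ψ ^ (d + 1) = 0)
    (hKψ : K * ψ = q ^ 2 • (ψ * K))
    (hinv : ∀ x : 𝕂, IsUnit (1 - x • ψ))
    (B : Module.End 𝕂 V)
    (hB : B = (1 - (a * q) • ψ) * Ring.inverse (1 - (a⁻¹ * q) • ψ) * K)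
    (M : Module.End 𝕂 V)
    (hM : M = (a - a⁻¹)⁻¹ • (a • K - a⁻¹ • B))
    (hMunit : IsUnit M):
    DirectSum.IsInternal (fun i : Fin (d + 1) => Module.End.eigenspace M (q ^ ((d : ℤ) - 2 * (i.1 : ℤ)))) ∧
    ∀ i : Fin (d + 1), Module.End.eigenspace M (q ^ ((d : ℤ) - 2 * (i.1 : ℤ))) ≠ ⊥ := by
  classical
  set P : Module.End 𝕂 V := 1 - (a⁻¹ * q) • ψ with hPdef
  have hP : IsUnit P := hinv _
  -- a - a⁻¹ ≠ 0
  have haa : a - a⁻¹ ≠ 0 := by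
    intro h
    have h1 : a = a⁻¹ := sub_eq_zero.mp h
    have h2 : a ^ 2 = 1 := by
      have h3 := mul_inv_cancel₀ ha
      calc a ^ 2 = a * a := sq a
        _ = a * a⁻¹ := by rw [← h1]
        _ = 1 := h3
    have h4 := ha2 0 (by omega) (by omega)
    simp only [mul_zero, zpow_zero] at h4
    exact h4 h2
  -- M = P⁻¹ * K
  have hM' : M = Ring.inverse P * K := by
    have h1 : a • P - a⁻¹ • (1 - (a * q) • ψ) = (a - a⁻¹) • (1 : Module.End 𝕂 V) := by
      rw [hPdef, smul_sub, smul_sub, smul_smul, smul_smul, sub_smul,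
        show a * (a⁻¹ * q) = q by field_simp, show a⁻¹ * (a * q) = q by field_simp]
      abel
    have h2 : a • K - a⁻¹ • B = (a - a⁻¹) • (Ring.inverse P * K) := by
      rw [hB]
      calc a • K - a⁻¹ • ((1 - (a * q) • ψ) * Ring.inverse P * K)
          = (a • P) * (Ring.inverse P * K)
            - (a⁻¹ • (1 - (a * q) • ψ)) * (Ring.inverse P * K) := by
            rw [smul_mul_assoc, smul_mul_assoc, ← mul_assoc P,
              Ring.mul_inverse_cancel P hP, one_mul, mul_assoc]
        _ = (a • P - a⁻¹ • (1 - (a * q) • ψ)) * (Ring.inverse P * K) := by rw [sub_mul]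
        _ = (a - a⁻¹) • (Ring.inverse P * K) := by rw [h1, smul_mul_assoc, one_mul]
    rw [hM, h2, smul_smul, inv_mul_cancel₀ haa, one_smul]
  -- coefficients
  set c : ℕ → 𝕂 := stmt9c a q with hc
  have hc0 : c 0 = 1 := rfl
  have hrec : ∀ k : ℕ, k + 1 ≤ d →
      a⁻¹ * q * c k = c (k + 1) - q ^ (2 * (k + 1)) * c (k + 1) := by
    intro k hk
    have hne : 1 - q ^ (2 * (k + 1)) ≠ 0 := by
      intro h
      exact hq2 (k + 1) (by omega) hk (sub_eq_zero.mp h).symm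
    have hck : c (k + 1) = a⁻¹ * q * c k / (1 - q ^ (2 * (k + 1))) := rfl
    rw [hck]
    field_simp
  -- the operator S
  set S : Module.End 𝕂 V := ∑ k ∈ Finset.range (d + 1), c k • ψ ^ k with hSdef
  -- K ψ^k = q^{2k} ψ^k K
  have hKpow : ∀ k : ℕ, K * ψ ^ k = (q ^ (2 * k)) • (ψ ^ k * K) := by
    intro k
    induction k with
    | zero => simp
    | succ n ih =>
      have hstep : K * ψ ^ (n + 1) = (K * ψ ^ n) * ψ := by rw [pow_succ, mul_assoc]
      rw [hstep, ih, smul_mul_assoc, mul_assoc, hKψ, mul_smul_comm, smul_smul,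
        ← mul_assoc, ← pow_succ, ← pow_add,
        show 2 * n + 2 = 2 * (n + 1) from by omega]
  -- K S = P (S K)
  have hKS : K * S = P * (S * K) := by
    have hSK : S * K = ∑ k ∈ Finset.range (d + 1), c k • (ψ ^ k * K) := by
      rw [hSdef, Finset.sum_mul]
      exact Finset.sum_congr rfl fun k _ => smul_mul_assoc _ _ _
    have hLHS : K * S = ∑ k ∈ Finset.range (d + 1), (q ^ (2 * k) * c k) • (ψ ^ k * K) := by
      rw [hSdef, Finset.mul_sum]
      refine Finset.sum_congr rfl fun k _ => ?_
      rw [mul_smul_comm, hKpow k, smul_smul, mul_comm (c k)]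
    have hψSK : (a⁻¹ * q) • (ψ * (S * K))
        = ∑ k ∈ Finset.range (d + 1), (a⁻¹ * q * c k) • (ψ ^ (k + 1) * K) := by
      rw [hSK, Finset.mul_sum, Finset.smul_sum]
      refine Finset.sum_congr rfl fun k _ => ?_
      rw [mul_smul_comm, smul_smul, ← mul_assoc ψ, ← pow_succ']
    have key : (∑ k ∈ Finset.range (d + 1), (a⁻¹ * q * c k) • (ψ ^ (k + 1) * K))
        = ∑ k ∈ Finset.range (d + 1), (c k - q ^ (2 * k) * c k) • (ψ ^ k * K) := by
      rw [Finset.sum_range_succ, hψnil, zero_mul, smul_zero, add_zero,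
        Finset.sum_range_succ']
      have h0 : (c 0 - q ^ (2 * 0) * c 0) • (ψ ^ 0 * K) = 0 := by
        simp [hc0]
      rw [h0, add_zero]
      refine Finset.sum_congr rfl fun k hk => ?_
      rw [Finset.mem_range] at hk
      rw [hrec k (by omega)]
    have hRHS : P * (S * K) = (∑ k ∈ Finset.range (d + 1), c k • (ψ ^ k * K))
        - ∑ k ∈ Finset.range (d + 1), (a⁻¹ * q * c k) • (ψ ^ (k + 1) * K) := by
      rw [hPdef, sub_mul, one_mul, smul_mul_assoc, hψSK, hSK]
    rw [hLHS, hRHS, key, ← Finset.sum_sub_distrib]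
    refine Finset.sum_congr rfl fun k _ => ?_
    rw [← sub_smul, sub_sub_cancel]
  -- M S = S K
  have hMS : M * S = S * K := by
    rw [hM', mul_assoc, hKS, ← mul_assoc, Ring.inverse_mul_cancel P hP, one_mul]
  -- S is a unit
  have hS1 : S = (∑ k ∈ Finset.range d, c (k + 1) • ψ ^ (k + 1)) + 1 := by
    rw [hSdef, Finset.sum_range_succ']
    simp [hc0]
  have hNψ : (∑ k ∈ Finset.range d, c (k + 1) • ψ ^ (k + 1))
      = ψ * (∑ k ∈ Finset.range d, c (k + 1) • ψ ^ k) := by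
    rw [Finset.mul_sum]
    exact Finset.sum_congr rfl fun k _ => by rw [mul_smul_comm, ← pow_succ']
  have hR : Commute ψ (∑ k ∈ Finset.range d, c (k + 1) • ψ ^ k) :=
    Commute.sum_right _ _ _ fun k _ => ((Commute.refl ψ).pow_right k).smul_right _
  have hNnil : IsNilpotent (∑ k ∈ Finset.range d, c (k + 1) • ψ ^ (k + 1)) :=
    ⟨d + 1, by rw [hNψ, hR.mul_pow, hψnil, zero_mul]⟩
  have hSunit : IsUnit S := hS1 ▸ hNnil.isUnit_add_one
  have hSbij : Function.Bijective S := (Module.End.isUnit_iff S).mp hSunit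
  -- the eigenvalues are pairwise distinct
  have hlt : ∀ i j : Fin (d + 1), (i : ℕ) < (j : ℕ) →
      q ^ ((d : ℤ) - 2 * (i.1 : ℤ)) ≠ q ^ ((d : ℤ) - 2 * (j.1 : ℤ)) := by
    intro i j hij heq
    have h1 : q ^ (((d : ℤ) - 2 * (i.1 : ℤ)) - ((d : ℤ) - 2 * (j.1 : ℤ))) = 1 := by
      rw [zpow_sub₀ hq, heq, div_self (zpow_ne_zero _ hq)]
    have h2 : ((d : ℤ) - 2 * (i.1 : ℤ)) - ((d : ℤ) - 2 * (j.1 : ℤ))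
        = ((2 * ((j : ℕ) - (i : ℕ)) : ℕ) : ℤ) := by
      push_cast [Nat.cast_sub hij.le]
      ring
    rw [h2, zpow_natCast] at h1
    exact hq2 ((j : ℕ) - (i : ℕ)) (by omega) (by have := j.isLt; omega) h1
  have hinj : Function.Injective (fun i : Fin (d + 1) => q ^ ((d : ℤ) - 2 * (i.1 : ℤ))) := by
    intro i j h
    by_contra hne
    have hne' : (i : ℕ) ≠ (j : ℕ) := fun h' => hne (Fin.ext h')
    rcases lt_or_gt_of_ne hne' with h1 | h1
    · exact hlt i j h1 h
    · exact hlt j i h1 h.symm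
  -- eigenspaces of K are exactly the U i
  set E : Fin (d + 1) → Submodule 𝕂 V :=
    fun i => Module.End.eigenspace K (q ^ ((d : ℤ) - 2 * (i.1 : ℤ))) with hE
  have hUE : ∀ i : Fin (d + 1), U i.1 ≤ E i := fun i v hv =>
    Module.End.mem_eigenspace_iff.mpr (hKU i.1 (Nat.lt_succ_iff.mp i.isLt) v hv)
  have hEindep : iSupIndep E := K.eigenspaces_iSupIndep.comp hinj
  have hsup : (⨆ j : Fin (d + 1), U j.1) = ⊤ := hUint.submodule_iSup_eq_top
  have hEU : ∀ i : Fin (d + 1), E i = U i.1 := by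
    intro i
    set Y : Submodule 𝕂 V := ⨆ j, ⨆ (_ : j ≠ i), U (j : ℕ) with hY
    have hsplit : U i.1 ⊔ Y = ⊤ := by
      rw [← hsup]
      apply le_antisymm
      · exact sup_le (le_iSup (fun j : Fin (d + 1) => U j.1) i)
          (iSup_le fun j => iSup_le fun _ => le_iSup (fun j : Fin (d + 1) => U j.1) j)
      · refine iSup_le fun j => ?_
        by_cases hji : j = i
        · subst hji; exact le_sup_left
        · exact le_trans (le_iSup₂ (f := fun (j : Fin (d + 1)) (_ : j ≠ i) => U (j : ℕ)) j hji)
            le_sup_right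
    have hYE : Y ⊓ E i = ⊥ := by
      have hle : Y ≤ ⨆ j, ⨆ (_ : j ≠ i), E j :=
        iSup_mono fun j => iSup_mono' fun hj => ⟨hj, hUE j⟩
      have hdisj : Disjoint (E i) (⨆ j, ⨆ (_ : j ≠ i), E j) := hEindep i
      have h3 : Y ⊓ E i ≤ (⨆ j, ⨆ (_ : j ≠ i), E j) ⊓ E i := inf_le_inf_right _ hle
      refine le_bot_iff.mp (h3.trans ?_)
      rw [inf_comm]
      exact hdisj.le_bot
    calc E i = ⊤ ⊓ E i := by rw [top_inf_eq]
      _ = (U i.1 ⊔ Y) ⊓ E i := by rw [hsplit]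
      _ = U i.1 ⊔ (Y ⊓ E i) := sup_inf_assoc_of_le _ (hUE i)
      _ = U i.1 := by rw [hYE, sup_bot_eq]
  -- eigenspaces of M are the images of the U i under S
  have hEM : ∀ i : Fin (d + 1),
      Module.End.eigenspace M (q ^ ((d : ℤ) - 2 * (i.1 : ℤ)))
        = Submodule.map (S : V →ₗ[𝕂] V) (U i.1) := by
    intro i
    rw [← hEU i]
    ext v
    simp only [Submodule.mem_map]
    rw [Module.End.mem_eigenspace_iff]
    constructor
    · intro hv
      obtain ⟨w, rfl⟩ := hSbij.2 v
      refine ⟨w, ?_, rfl⟩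
      rw [hE, Module.End.mem_eigenspace_iff]
      apply hSbij.1
      have h1 : S (K w) = M (S w) := by
        rw [← Module.End.mul_apply, ← Module.End.mul_apply, hMS]
      rw [h1, hv, map_smul]
    · rintro ⟨w, hw, rfl⟩
      rw [hE, Module.End.mem_eigenspace_iff] at hw
      rw [← Module.End.mul_apply, hMS, Module.End.mul_apply, hw, map_smul]
  -- transport the direct sum decomposition through S
  let e : V ≃ₗ[𝕂] V := LinearEquiv.ofBijective S hSbij
  have hmap : ∀ p : Submodule 𝕂 V,
      Submodule.map (e : V →ₗ[𝕂] V) p = Submodule.map (S : V →ₗ[𝕂] V) p := by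
    intro p
    ext x
    simp only [Submodule.mem_map]
    exact Iff.rfl
  have hind : iSupIndep (fun i : Fin (d + 1) => Submodule.map (S : V →ₗ[𝕂] V) (U i.1)) := by
    have h := iSupIndep.map_orderIso (Submodule.orderIsoMapComap e) (DirectSum.IsInternal.submodule_iSupIndep hUint)
    have heq : (Submodule.orderIsoMapComap e ∘ fun i : Fin (d + 1) => U i.1)
        = fun i : Fin (d + 1) => Submodule.map (S : V →ₗ[𝕂] V) (U i.1) := by
      funext i
      show Submodule.map (e : V →ₗ[𝕂] V) (U i.1) = _
      exact hmap _
    rwa [heq] at h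
  have hsupM : (⨆ i : Fin (d + 1), Submodule.map (S : V →ₗ[𝕂] V) (U i.1)) = ⊤ := by
    rw [← Submodule.map_iSup, hsup, Submodule.map_top, LinearMap.range_eq_top.mpr hSbij.2]
  constructor
  · simp only [hEM]
    exact DirectSum.isInternal_submodule_of_iSupIndep_of_iSup_eq_top hind hsupM
  · intro i
    rw [hEM i]
    intro hbot
    apply hUne i.1 (Nat.lt_succ_iff.mp i.isLt)
    rw [Submodule.eq_bot_iff] at hbot ⊢
    intro x hx
    have h1 := hbot (S x) ⟨x, hx, rfl⟩
    have h2 : S x = S 0 := by rw [map_zero]; exact h1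
    exact hSbij.1 h2
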